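/- Let p be a projection and e an effect, with cosine c, sine s, j := (p(e−e²)p + p⊥(e−e²)p⊥)^{1/2}, and commutator effect b := (c²s² − j²)^{1/2}. Then the following are mutually equivalent: (i) pe = ep; (ii) b = 0; (iii) cs = j; (iv) e = c²p + s²p⊥. -/

import Mathlib

open StarAlgebra in
private lemma stmt10.mem_elem {A : Type*} [CStarAlgebra A] (v : A) (f : ℝ → ℝ) :
    cfc f v ∈ elemental ℂ v := by
  refine cfc_cases (fun x => x ∈ elemental ℂ v) v f (zero_mem _) ?_
  intro hf hv'
  rw [cfcHom_real_eq_restrict hv']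
  simp only [SpectrumRestricts.starAlgHom, StarAlgHom.comp_apply, StarAlgHom.restrictScalars_apply]
  rw [cfcHom_eq_of_isStarNormal]
  simp only [StarAlgHom.comp_apply]
  exact SetLike.coe_mem _

private lemma stmt10.commute_cfc {A : Type*} [CStarAlgebra A] {a v : A} (ha : IsSelfAdjoint a)
    (h : Commute a v) (f : ℝ → ℝ) : Commute a (cfc f v) := by
  have hset : ((StarSubalgebra.centralizer ℂ {a} : StarSubalgebra ℂ A) : Set A)
      = {z : A | a * z = z * a} := by
    ext z
    simp only [StarSubalgebra.coe_centralizer, Set.mem_centralizer_iff, Set.mem_union,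
      Set.mem_singleton_iff, Set.mem_setOf_eq, Set.star_singleton, ha.star_eq]
    constructor
    · intro h'; exact h' a (Or.inl rfl)
    · rintro h' m (rfl | rfl) <;> exact h'
  have hclosed : IsClosed ((StarSubalgebra.centralizer ℂ {a} : StarSubalgebra ℂ A) : Set A) := by
    rw [hset]
    exact isClosed_eq (continuous_const.mul continuous_id) (continuous_id.mul continuous_const)
  have hvmem : v ∈ StarSubalgebra.centralizer ℂ {a} := by
    rw [← SetLike.mem_coe, hset]; exact h.eq
  have h2 := StarAlgebra.elemental.le_of_mem (R := ℂ) hclosed hvmem (stmt10.mem_elem v f)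
  rw [← SetLike.mem_coe, hset] at h2
  exact h2

private lemma stmt10.commute_of_commute_sq {A : Type*} [CStarAlgebra A] [PartialOrder A]
    [StarOrderedRing A] {a u : A} (ha : IsSelfAdjoint a) (hu : 0 ≤ u)
    (h : Commute a (u ^ 2)) : Commute a u := by
  have hu2 : (0 : A) ≤ u ^ 2 := by
    rw [sq]
    nth_rewrite 1 [← (IsSelfAdjoint.of_nonneg hu).star_eq]
    exact star_mul_self_nonneg u
  have hw0 : 0 ≤ cfc Real.sqrt (u ^ 2) := cfc_nonneg fun x _ => Real.sqrt_nonneg x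
  have hwsq : (cfc Real.sqrt (u ^ 2)) ^ 2 = u ^ 2 := by
    rw [← cfc_pow Real.sqrt 2 (ha := IsSelfAdjoint.of_nonneg hu2)]
    calc cfc (fun x => Real.sqrt x ^ 2) (u ^ 2) = cfc (fun x : ℝ => x) (u ^ 2) := by
          apply cfc_congr
          intro x hx
          exact Real.sq_sqrt (spectrum_nonneg_of_nonneg hu2 hx)
      _ = u ^ 2 := cfc_id ℝ _
  have huw : u = cfc Real.sqrt (u ^ 2) := by
    have h1 := CFC.sqrt_sq u hu
    have h2 := CFC.sqrt_sq (cfc Real.sqrt (u ^ 2)) hw0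
    rw [hwsq] at h2
    exact h1.symm.trans h2
  rw [huw]
  exact stmt10.commute_cfc ha h _

private lemma stmt10.sq_inj {A : Type*} [CStarAlgebra A] [PartialOrder A]
    [StarOrderedRing A] {u v : A} (hu : 0 ≤ u) (hv : 0 ≤ v) (h : u ^ 2 = v ^ 2) : u = v := by
  have h1 := CFC.sqrt_sq u hu
  have h2 := CFC.sqrt_sq v hv
  rw [h] at h1
  exact h1.symm.trans h2

/-- In a unital C*-algebra, with `p` a projection, `e` an effect,
`c` the cosine, `s` the sine, `j = (p(e−e²)p + p⊥(e−e²)p⊥)^{1/2}`, and the commutator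
effect `b = (c²s² − j²)^{1/2}` (all square roots encoded by nonnegativity plus the
defining equation), the following are equivalent:
(i) `pe = ep`; (ii) `b = 0`; (iii) `cs = j`; (iv) `e = c²p + s²p⊥`. -/
theorem stmt10 {A : Type*} [CStarAlgebra A] [PartialOrder A] [StarOrderedRing A]
    (p e c s j b : A) (hp : IsSelfAdjoint p) (hp2 : p ^ 2 = p)
    (he0 : 0 ≤ e) (he1 : e ≤ 1)
    (hc0 : 0 ≤ c) (hc2 : c ^ 2 = p * e * p + (1 - p) * (1 - e) * (1 - p))
    (hs0 : 0 ≤ s) (hs2 : s ^ 2 = p * (1 - e) * p + (1 - p) * e * (1 - p))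
    (hj0 : 0 ≤ j)
    (hj2 : j ^ 2 = p * (e - e ^ 2) * p + (1 - p) * (e - e ^ 2) * (1 - p))
    (hb0 : 0 ≤ b) (hb2 : b ^ 2 = c ^ 2 * s ^ 2 - j ^ 2) :
    List.TFAE [p * e = e * p, b = 0, c * s = j, e = c ^ 2 * p + s ^ 2 * (1 - p)] := by
  have hse : star e = e := (IsSelfAdjoint.of_nonneg he0).star_eq
  have hpp : p * p = p := by rw [← sq]; exact hp2
  have h1t : ∀ t : A, p * (p * t) = p * t := fun t => by rw [← mul_assoc, hpp]
  have hp0 : p * (1 - p) = 0 := by rw [mul_sub, mul_one, hpp, sub_self]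
  have hq0 : (1 - p) * p = 0 := by rw [sub_mul, one_mul, hpp, sub_self]
  have hqq : (1 - p) * (1 - p) = 1 - p := by
    have h' : (1 - p) * (1 - p) = 1 - p - (p - p * p) := by noncomm_ring
    rw [hpp, sub_self, sub_zero] at h'
    exact h'
  set x := p * e * (1 - p) with hx
  have hxstar : star x = (1 - p) * (e * p) := by
    rw [hx, star_mul, star_mul, star_sub, star_one, hp.star_eq, hse]
  -- key identity
  have hbkey : b ^ 2 = x * star x + star x * x := by
    rw [hb2, hc2, hs2, hj2, hxstar, hx]
    simp only [mul_sub, sub_mul, mul_add, add_mul, mul_one, one_mul, mul_assoc, h1t, hpp, sq]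
    abel
  -- (ii) ↔ x = 0
  have h20 : b = 0 ↔ x = 0 := by
    constructor
    · intro hb
      have hzero : x * star x + star x * x = 0 := by
        rw [← hbkey, hb]; simp
      have hneg : star x * x = -(x * star x) := eq_neg_of_add_eq_zero_right hzero
      have hle : star x * x ≤ 0 := hneg ▸ neg_nonpos_of_nonneg (mul_star_self_nonneg x)
      have h2 : star x * x = 0 := le_antisymm hle (star_mul_self_nonneg x)
      exact (CStarRing.star_mul_self_eq_zero_iff x).mp h2
    · intro hx0
      have hb20 : b ^ 2 = 0 := by rw [hbkey, hx0]; simp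
      have h1 := CFC.sqrt_sq b hb0
      rw [hb20, CFC.sqrt_zero] at h1
      exact h1.symm
  -- (i) ↔ x = 0
  have h10 : p * e = e * p ↔ x = 0 := by
    constructor
    · intro h
      rw [hx, h, mul_assoc, hp0, mul_zero]
    · intro h0
      have hsx : star x = 0 := by rw [h0, star_zero]
      have hd : p * e - e * p = x - star x := by rw [hx, hxstar]; noncomm_ring
      rw [hsx, h0, sub_zero] at hd
      exact sub_eq_zero.mp hd
  -- (iv) ↔ x = 0
  have hc2p : c ^ 2 * p = p * e * p := by
    rw [hc2]
    simp only [add_mul, mul_assoc, hpp, hq0, mul_zero, add_zero]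
  have hs2q : s ^ 2 * (1 - p) = (1 - p) * (e * (1 - p)) := by
    rw [hs2]
    simp only [add_mul, mul_assoc, hp0, hqq, mul_zero, zero_add]
  have hdecomp : e - (p * e * p + (1 - p) * (e * (1 - p))) = x + star x := by
    rw [hx, hxstar]; noncomm_ring
  have h40 : (e = c ^ 2 * p + s ^ 2 * (1 - p)) ↔ x = 0 := by
    rw [hc2p, hs2q]
    constructor
    · intro h
      have hsum : x + star x = 0 := by rw [← hdecomp, sub_eq_zero]; exact h
      have hx' : p * ((x + star x) * (1 - p)) = x := by
        rw [hx, hxstar]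
        simp only [add_mul, mul_add, mul_assoc, hqq, hq0, hp0, mul_zero, add_zero, h1t]
      rw [hsum] at hx'
      simpa using hx'.symm
    · intro h0
      have hsx : star x = 0 := by rw [h0, star_zero]
      have : e - (p * e * p + (1 - p) * (e * (1 - p))) = 0 := by
        rw [hdecomp, hsx, h0, add_zero]
      exact sub_eq_zero.mp this
  -- (iii) ↔ (ii)
  have hcs1 : s ^ 2 = 1 - c ^ 2 := by
    rw [hc2, hs2]
    simp only [mul_sub, sub_mul, mul_add, add_mul, mul_one, one_mul, mul_assoc, h1t, hpp]
    abel
  have hccs : Commute c s := by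
    apply stmt10.commute_of_commute_sq (IsSelfAdjoint.of_nonneg hc0) hs0
    rw [hcs1]
    exact (Commute.one_right c).sub_right ((Commute.refl c).pow_right 2)
  have h32 : c * s = j ↔ b = 0 := by
    constructor
    · intro h
      have hcsj : c ^ 2 * s ^ 2 = j ^ 2 := by rw [← h, hccs.mul_pow]
      have hb20 : b ^ 2 = 0 := by rw [hb2, hcsj, sub_self]
      have h1 := CFC.sqrt_sq b hb0
      rw [hb20, CFC.sqrt_zero] at h1
      exact h1.symm
    · intro hb
      have hb20 : b ^ 2 = 0 := by rw [hb]; simp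
      rw [hb2] at hb20
      have hsq : (c * s) ^ 2 = j ^ 2 := by
        rw [hccs.mul_pow]
        exact sub_eq_zero.mp hb20
      have hcs0 : 0 ≤ c * s := by
        have hr0 : 0 ≤ CFC.sqrt c := CFC.sqrt_nonneg c
        have hr2 : (CFC.sqrt c) ^ 2 = c := CFC.sq_sqrt c hc0
        have hsr : Commute s (CFC.sqrt c) :=
          stmt10.commute_of_commute_sq (IsSelfAdjoint.of_nonneg hs0) hr0
            (by rw [hr2]; exact hccs.symm)
        have hconj : c * s = CFC.sqrt c * s * CFC.sqrt c := by
          calc c * s = (CFC.sqrt c) ^ 2 * s := by rw [hr2]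
            _ = CFC.sqrt c * (CFC.sqrt c * s) := by rw [sq, mul_assoc]
            _ = CFC.sqrt c * (s * CFC.sqrt c) := by rw [← hsr.eq]
            _ = CFC.sqrt c * s * CFC.sqrt c := by rw [mul_assoc]
        rw [hconj]
        have := star_left_conjugate_nonneg hs0 (CFC.sqrt c)
        rwa [(IsSelfAdjoint.of_nonneg hr0).star_eq] at this
      exact stmt10.sq_inj hcs0 hj0 hsq
  tfae_have 1 ↔ 2 := h10.trans h20.symm
  tfae_have 3 ↔ 2 := h32
  tfae_have 4 ↔ 2 := h40.trans h20.symm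
  tfae_finish
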